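/- Under the Slater condition, the dual problem sup_{z ∈ cone(M)} θ(z) attains its supremum: there exists z* ∈ cone(M) with θ(z*) = sup_{z ∈ cone(M)} θ(z). -/

import Mathlib

open scoped RealInnerProductSpace

/-- The convex conic hull of a set `M`: all nonnegative multiples of points of `conv(M)`. -/
def coneHull {E : Type*} [AddCommGroup E] [Module ℝ E] (M : Set E) : Set E :=
  {z | ∃ t : ℝ, 0 ≤ t ∧ ∃ w ∈ convexHull ℝ M, z = t • w}


open Module in
/-- In a Euclidean space, the convex hull of a compact set is compact (Carathéodory). -/
lemma aux_isCompact_convexHull {d : ℕ} {s : Set (EuclideanSpace ℝ (Fin d))}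
    (hs : IsCompact s) (hsne : s.Nonempty) : IsCompact (convexHull ℝ s) := by
  classical
  obtain ⟨s0, hs0⟩ := hsne
  set N := d + 1 with hN
  set f : (Fin N → ℝ) × (Fin N → EuclideanSpace ℝ (Fin d)) → EuclideanSpace ℝ (Fin d) :=
    fun p => ∑ i, p.1 i • p.2 i with hf
  have himg : convexHull ℝ s = f '' (stdSimplex ℝ (Fin N) ×ˢ Set.univ.pi fun _ => s) := by
    apply Set.Subset.antisymm
    · intro x hx
      obtain ⟨ι, hfin, z, w, hzs, hai, hwpos, hwsum, hwz⟩ :=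
        eq_pos_convex_span_of_mem_convexHull hx
      have hcard : Fintype.card ι ≤ N := by
        have h1 := hai.card_le_finrank_succ
        have h2 : finrank ℝ (vectorSpan ℝ (Set.range z)) ≤
            finrank ℝ (EuclideanSpace ℝ (Fin d)) := Submodule.finrank_le _
        have h3 : finrank ℝ (EuclideanSpace ℝ (Fin d)) = d := finrank_euclideanSpace_fin
        omega
      obtain ⟨e⟩ : Nonempty (ι ↪ Fin N) :=
        Function.Embedding.nonempty_of_card_le (by simpa using hcard)
      set lam : Fin N → ℝ := Function.extend e w 0 with hlam
      set zz : Fin N → EuclideanSpace ℝ (Fin d) := Function.extend e z (fun _ => s0) with hzz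
      have hlam_off : ∀ j, j ∉ Finset.univ.image e → lam j = 0 := by
        intro j hj
        have hne : ¬ ∃ i, e i = j := by
          rintro ⟨i, rfl⟩; exact hj (Finset.mem_image.mpr ⟨i, Finset.mem_univ i, rfl⟩)
        simp [hlam, Function.extend_apply' _ _ _ hne]
      have hnn : ∀ j, 0 ≤ lam j := by
        intro j
        by_cases hj : ∃ i, e i = j
        · obtain ⟨i, rfl⟩ := hj
          rw [hlam, e.injective.extend_apply]
          exact (hwpos i).le
        · simp [hlam, Function.extend_apply' _ _ _ hj]
      have hmem : ∀ j, zz j ∈ s := by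
        intro j
        by_cases hj : ∃ i, e i = j
        · obtain ⟨i, rfl⟩ := hj
          rw [hzz, e.injective.extend_apply]
          exact hzs ⟨i, rfl⟩
        · rw [hzz, Function.extend_apply' _ _ _ hj]
          exact hs0
      have hsum1 : ∑ j, lam j = 1 := by
        rw [← Finset.sum_subset (Finset.subset_univ (Finset.univ.image e))
          (fun j _ hj => hlam_off j hj)]
        rw [Finset.sum_image (fun a _ b _ h => e.injective h)]
        rw [← hwsum]
        exact Finset.sum_congr rfl fun i _ => by rw [hlam, e.injective.extend_apply]
      have hval : ∑ j, lam j • zz j = x := by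
        rw [← Finset.sum_subset (Finset.subset_univ (Finset.univ.image e))
          (fun j _ hj => by rw [hlam_off j hj, zero_smul])]
        rw [Finset.sum_image (fun a _ b _ h => e.injective h)]
        rw [← hwz]
        exact Finset.sum_congr rfl fun i _ => by
          rw [hlam, hzz, e.injective.extend_apply, e.injective.extend_apply]
      exact ⟨(lam, zz), ⟨⟨hnn, hsum1⟩, fun j _ => hmem j⟩, hval⟩
    · rintro x ⟨⟨lam, zz⟩, ⟨hlam, hzz⟩, rfl⟩
      exact (convex_convexHull ℝ s).sum_mem (fun i _ => hlam.1 i) hlam.2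
        (fun i _ => subset_convexHull ℝ s (hzz i (Set.mem_univ i)))
  rw [himg]
  refine IsCompact.image (IsCompact.prod (isCompact_stdSimplex ..) (isCompact_univ_pi fun _ => hs)) ?_
  exact continuous_finset_sum _ fun i _ =>
    ((continuous_apply i).comp continuous_fst).smul ((continuous_apply i).comp continuous_snd)

/-- Under the Slater condition and absence of duality gap, the dual problem
`sup_{z ∈ cone(M)} θ(z)` attains its supremum. -/
theorem dual_attains_supremum {m n : ℕ}
    (X : Set (EuclideanSpace ℝ (Fin m)))
    (hXne : X.Nonempty) (hXc : IsCompact X) (hXconv : Convex ℝ X)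
    (F : EuclideanSpace ℝ (Fin m) → ℝ) (hFc : Continuous F)
    (hFconv : ConvexOn ℝ Set.univ F)
    (Y : Set (EuclideanSpace ℝ (Fin n))) (hYne : Y.Nonempty) (hYc : IsCompact Y)
    (a : EuclideanSpace ℝ (Fin n) → EuclideanSpace ℝ (Fin m)) (ha : Continuous a)
    (M : Set (EuclideanSpace ℝ (Fin m))) (hM : M = a '' Y)
    (θ : EuclideanSpace ℝ (Fin m) → ℝ)
    (hθ : ∀ z, IsLeast {v : ℝ | ∃ x ∈ X, v = F x + ⟪x, z⟫} (θ z))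
    (hslater : ∃ xh ∈ X, ∀ z ∈ M, ⟪xh, z⟫ < 0)
    (V : ℝ)
    (hVdual : IsLUB (θ '' coneHull M) V)
    (hVprimal : IsLeast {v : ℝ | ∃ x ∈ X, (∀ z ∈ M, ⟪x, z⟫ ≤ 0) ∧ v = F x} V) :
    ∃ zstar ∈ coneHull M, IsGreatest (θ '' coneHull M) (θ zstar) := by
  obtain ⟨xh, hxhX, hxh⟩ := hslater
  -- M is compact and nonempty
  have hMc : IsCompact M := hM ▸ hYc.image ha
  have hMne : M.Nonempty := hM ▸ hYne.image a
  -- convex hull of M is compact and nonempty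
  have hHc : IsCompact (convexHull ℝ M) := aux_isCompact_convexHull hMc hMne
  have hHne : (convexHull ℝ M).Nonempty := hMne.mono (subset_convexHull ℝ M)
  -- inner xh is negative on the hull
  have hlin : IsLinearMap ℝ (fun w : EuclideanSpace ℝ (Fin m) => ⟪xh, w⟫) :=
    ⟨fun a b => inner_add_right xh a b, fun c x => real_inner_smul_right xh x c⟩
  have hneg : ∀ w ∈ convexHull ℝ M, ⟪xh, w⟫ < 0 := by
    intro w hw
    exact convexHull_min hxh (convex_halfSpace_lt hlin 0) hw
  -- uniform bound: inner xh w ≤ -δ on the hull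
  have hcont_inner : Continuous (fun w : EuclideanSpace ℝ (Fin m) => ⟪xh, w⟫) :=
    continuous_const.inner continuous_id
  obtain ⟨w0, hw0H, hw0max⟩ := hHc.exists_isMaxOn hHne hcont_inner.continuousOn
  set δ : ℝ := -⟪xh, w0⟫ with hδdef
  have hδpos : 0 < δ := by simpa [hδdef] using hneg w0 hw0H
  have hub : ∀ w ∈ convexHull ℝ M, ⟪xh, w⟫ ≤ -δ := by
    intro w hw
    simpa [hδdef] using hw0max hw
  -- V ≤ F xh (xh is primal feasible)
  have hVFxh : V ≤ F xh := hVprimal.2 ⟨xh, hxhX, fun z hz => (hxh z hz).le, rfl⟩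
  set T : ℝ := (F xh - V + 1) / δ with hTdef
  have hTpos : 0 < T := div_pos (by linarith) hδpos
  -- θ is Lipschitz (hence continuous)
  obtain ⟨R, hR⟩ := hXc.isBounded.exists_norm_le
  have hR0 : 0 ≤ R := le_trans (norm_nonneg _) (hR hXne.choose hXne.choose_spec)
  have hstep : ∀ z₁ z₂, θ z₁ - θ z₂ ≤ R * ‖z₁ - z₂‖ := by
    intro z₁ z₂
    obtain ⟨x₂, hx₂X, hx₂⟩ := (hθ z₂).1
    have h1 : θ z₁ ≤ F x₂ + ⟪x₂, z₁⟫ := (hθ z₁).2 ⟨x₂, hx₂X, rfl⟩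
    have h2 : ⟪x₂, z₁⟫ - ⟪x₂, z₂⟫ = ⟪x₂, z₁ - z₂⟫ := by
      rw [inner_sub_right]
    have h3 : ⟪x₂, z₁ - z₂⟫ ≤ ‖x₂‖ * ‖z₁ - z₂‖ := real_inner_le_norm _ _
    have h4 : ‖x₂‖ * ‖z₁ - z₂‖ ≤ R * ‖z₁ - z₂‖ :=
      mul_le_mul_of_nonneg_right (hR x₂ hx₂X) (norm_nonneg _)
    linarith
  have hθcont : Continuous θ := by
    have : LipschitzWith ⟨R, hR0⟩ θ := by
      apply LipschitzWith.of_dist_le_mul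
      intro z₁ z₂
      rw [Real.dist_eq, abs_sub_le_iff]
      constructor
      · show θ z₁ - θ z₂ ≤ R * dist z₁ z₂
        rw [dist_eq_norm]; exact hstep z₁ z₂
      · have := hstep z₂ z₁
        rw [norm_sub_rev] at this
        show θ z₂ - θ z₁ ≤ R * dist z₁ z₂
        rw [dist_eq_norm]; exact this
    exact this.continuous
  -- truncated cone K
  set K : Set (EuclideanSpace ℝ (Fin m)) :=
    (fun p : ℝ × EuclideanSpace ℝ (Fin m) => p.1 • p.2) '' (Set.Icc 0 T ×ˢ convexHull ℝ M)
    with hKdef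
  have hKc : IsCompact K := (isCompact_Icc.prod hHc).image (continuous_fst.smul continuous_snd)
  have hKne : K.Nonempty := ⟨(0 : ℝ) • hHne.choose,
    ⟨(0, hHne.choose), ⟨⟨le_refl 0, hTpos.le⟩, hHne.choose_spec⟩, rfl⟩⟩
  have hKsub : K ⊆ coneHull M := by
    rintro z ⟨⟨t, w⟩, ⟨⟨ht0, _⟩, hw⟩, rfl⟩
    exact ⟨t, ht0, w, hw, rfl⟩
  -- θ attains its max on K
  obtain ⟨zstar, hzK, hzmax⟩ := hKc.exists_isMaxOn hKne hθcont.continuousOn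
  refine ⟨zstar, hKsub hzK, ⟨zstar, hKsub hzK, rfl⟩, ?_⟩
  -- suffices θ zstar = V
  have hle : θ zstar ≤ V := hVdual.1 ⟨zstar, hKsub hzK, rfl⟩
  have hge : V ≤ θ zstar := by
    by_contra hlt
    push_neg at hlt
    set c : ℝ := max (θ zstar) (V - 1) with hcdef
    have hcV : c < V := max_lt hlt (by linarith)
    have hex : ∃ v ∈ θ '' coneHull M, c < v := by
      by_contra h
      push_neg at h
      exact absurd (hVdual.2 fun v hv => h v hv) (not_le.mpr hcV)
    obtain ⟨v, ⟨z, hz, rfl⟩, hcv⟩ := hex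
    obtain ⟨t, ht0, w, hwH, rfl⟩ := hz
    -- θ (t•w) ≤ F xh - t δ
    have h1 : θ (t • w) ≤ F xh + ⟪xh, t • w⟫ := (hθ (t • w)).2 ⟨xh, hxhX, rfl⟩
    have h2 : ⟪xh, t • w⟫ = t * ⟪xh, w⟫ := real_inner_smul_right xh w t
    have h3 : t * ⟪xh, w⟫ ≤ t * (-δ) := mul_le_mul_of_nonneg_left (hub w hwH) ht0
    have hVc : V - 1 ≤ c := le_max_right _ _
    have htT : t ≤ T := by
      have h5 : t * δ ≤ F xh - θ (t • w) := by
        have := h1; rw [h2] at this; linarith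
      have h6 : t * δ < F xh - V + 1 := by
        have : V - 1 < θ (t • w) := lt_of_le_of_lt hVc hcv
        linarith
      rw [hTdef, le_div_iff₀ hδpos]
      linarith
    have hzK' : t • w ∈ K := ⟨(t, w), ⟨⟨ht0, htT⟩, hwH⟩, rfl⟩
    have : θ (t • w) ≤ θ zstar := hzmax hzK'
    have : θ (t • w) ≤ c := le_trans this (le_max_left _ _)
    linarith
  have hV : θ zstar = V := le_antisymm hle hge
  intro v hv
  rw [hV]
  exact hVdual.1 hv
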